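/- Let E be a finite-dimensional real inner product space, W ⊆ E a linear subspace, and R := W^⊥ its orthogonal complement. Let S ⊆ E be a nonempty closed convex set that is invariant under translations by W, i.e. s + w ∈ S for all s ∈ S and w ∈ W. Then R ∩ S is nonempty, and for every v ∈ E the nearest-point projection onto R ∩ S factors as Π_{R∩S}(v) = Π_R(Π_S(v)), where Π_S(v) is the unique nearest point of S to v and Π_R is the orthogonal projection onto the subspace R. -/

import Mathlib

open scoped RealInnerProductSpace

lemma pyth_aux {E : Type*} [NormedAddCommGroup E] [InnerProductSpace ℝ E]
    (W : Submodule ℝ E) {a b : E} (ha : a ∈ W) (hb : b ∈ Wᗮ) :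
    ‖a + b‖ ^ 2 = ‖a‖ ^ 2 + ‖b‖ ^ 2 := by
  have h : (inner ℝ a b : ℝ) = 0 := (Submodule.mem_orthogonal _ _).mp hb a ha
  have := norm_add_sq_real a b
  rw [h] at this
  linarith

/- STATEMENT 11: Let `E` be a finite-dimensional real inner product space, `W` a
subspace, `R := Wᗮ`, and `S` a nonempty closed convex set invariant under
translations by `W`. Then `R ∩ S` is nonempty and the nearest-point projection
onto `R ∩ S` factors as `Π_{R∩S}(v) = Π_R(Π_S(v))`: whenever `pS` is the nearest
point of `S` to `v`, the orthogonal projection of `pS` onto `R` is the nearest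
point of `R ∩ S` to `v`. -/
theorem stmt11 {E : Type*} [NormedAddCommGroup E] [InnerProductSpace ℝ E]
    [FiniteDimensional ℝ E]
    (W : Submodule ℝ E) (S : Set E)
    (hne : S.Nonempty) (hcl : IsClosed S) (hconv : Convex ℝ S)
    (hinv : ∀ s ∈ S, ∀ w ∈ W, s + w ∈ S) :
    ((Wᗮ : Set E) ∩ S).Nonempty ∧
    ∀ v pS : E, pS ∈ S → (∀ x ∈ S, ‖v - pS‖ ≤ ‖v - x‖) →
      ((Submodule.orthogonalProjectionOnto Wᗮ pS : E) ∈ (Wᗮ : Set E) ∩ S ∧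
        ∀ x ∈ (Wᗮ : Set E) ∩ S, ‖v - (Submodule.orthogonalProjectionOnto Wᗮ pS : E)‖ ≤ ‖v - x‖) := by
  have hW : ∀ u : E, u - (Submodule.orthogonalProjectionOnto Wᗮ u : E) ∈ W := by
    intro u
    have := Submodule.sub_starProjection_mem_orthogonal (K := Wᗮ) u
    rwa [Submodule.orthogonal_orthogonal] at this
  have hS : ∀ u ∈ S, (Submodule.orthogonalProjectionOnto Wᗮ u : E) ∈ S := by
    intro u hu
    have h2 : (Submodule.orthogonalProjectionOnto Wᗮ u : E) = u + -(u - (Submodule.orthogonalProjectionOnto Wᗮ u : E)) := by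
      abel
    rw [h2]
    exact hinv u hu _ (neg_mem (hW u))
  constructor
  · obtain ⟨s, hs⟩ := hne
    exact ⟨Submodule.orthogonalProjectionOnto Wᗮ s, SetLike.coe_mem _, hS s hs⟩
  intro v pS hpS hnear
  set q : E := (Submodule.orthogonalProjectionOnto Wᗮ pS : E) with hq
  have hqR : q ∈ Wᗮ := SetLike.coe_mem _
  have hqS : q ∈ S := hS pS hpS
  refine ⟨⟨hqR, hqS⟩, ?_⟩
  rintro x ⟨hxR, hxS⟩
  set vR : E := (Submodule.orthogonalProjectionOnto Wᗮ v : E) with hvRdef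
  set vW : E := v - vR with hvWdef
  have hvW : vW ∈ W := hW v
  have hvRmem : vR ∈ Wᗮ := SetLike.coe_mem _
  have key1 : ‖vR - q‖ ≤ ‖v - pS‖ := by
    have hdecomp : v - pS = (vW - (pS - q)) + (vR - q) := by
      rw [hvWdef]; abel
    have hsq : ‖v - pS‖ ^ 2 = ‖vW - (pS - q)‖ ^ 2 + ‖vR - q‖ ^ 2 := by
      rw [hdecomp]; exact pyth_aux W (sub_mem hvW (hW pS)) (sub_mem hvRmem hqR)
    nlinarith [norm_nonneg (vW - (pS - q)), norm_nonneg (vR - q), norm_nonneg (v - pS)]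
  have key2 : ‖v - pS‖ ≤ ‖vR - x‖ := by
    have hx' : x + vW ∈ S := hinv x hxS vW hvW
    calc ‖v - pS‖ ≤ ‖v - (x + vW)‖ := hnear _ hx'
      _ = ‖vR - x‖ := by congr 1; rw [hvWdef]; abel
  have key3 : ‖vR - q‖ ≤ ‖vR - x‖ := key1.trans key2
  have e1 : ‖v - q‖ ^ 2 = ‖vW‖ ^ 2 + ‖vR - q‖ ^ 2 := by
    have h : v - q = vW + (vR - q) := by rw [hvWdef]; abel
    rw [h]; exact pyth_aux W hvW (sub_mem hvRmem hqR)
  have e2 : ‖v - x‖ ^ 2 = ‖vW‖ ^ 2 + ‖vR - x‖ ^ 2 := by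
    have h : v - x = vW + (vR - x) := by rw [hvWdef]; abel
    rw [h]; exact pyth_aux W hvW (sub_mem hvRmem hxR)
  nlinarith [norm_nonneg (v - q), norm_nonneg (v - x), norm_nonneg (vR - q), norm_nonneg (vR - x)]
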